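/- Let L : ℝⁿ × ℝⁿ → ℝ be periodic in x with respect to ℤⁿ, continuous, satisfying L(x,v) ≥ θ(|v|) − c₀ with θ superlinear, and L(x,v) ≤ κ₁(|v|) where κ₁(r) = max_{z,|v|≤r} L(z,v). Then there exists t₀ > 0 such that for all 0 < t ≤ t₀ and all x, y, y' ∈ ℝⁿ with |y − x| < t, y − y' ∈ ℤⁿ \ {0} (so |y − y'| ≥ √n): A_t(x,y) ≤ A_t(x,y'), where A_t is the minimal action. Consequently the infimum defining the fundamental solution on the torus 𝕋ⁿ is attained at representatives x, y with |x − y| < t. -/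
import Mathlib

open Set Filter MeasureTheory intervalIntegral

def actionSet {n : ℕ} (L : EuclideanSpace ℝ (Fin n) → EuclideanSpace ℝ (Fin n) → ℝ)
    (t : ℝ) (x y : EuclideanSpace ℝ (Fin n)) : Set ℝ :=
  {a | ∃ ξ ξ' : ℝ → EuclideanSpace ℝ (Fin n),
      IntervalIntegrable ξ' volume 0 t ∧
      IntervalIntegrable (fun s => L (ξ s) (ξ' s)) volume 0 t ∧
      (∀ s ∈ Set.Icc 0 t, ξ s = x + ∫ τ in (0:ℝ)..s, ξ' τ) ∧
      ξ 0 = x ∧ ξ t = y ∧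
      a = ∫ s in (0:ℝ)..t, L (ξ s) (ξ' s)}

/-- The straight-line action value belongs to the action set. -/
lemma straight_mem {n : ℕ} (L : EuclideanSpace ℝ (Fin n) → EuclideanSpace ℝ (Fin n) → ℝ)
    (hL : Continuous (Function.uncurry L)) {t : ℝ} (ht : 0 < t)
    (x z : EuclideanSpace ℝ (Fin n)) :
    (∫ s in (0:ℝ)..t, L (x + s • (t⁻¹ • (z - x))) (t⁻¹ • (z - x))) ∈ actionSet L t x z := by
  set v : EuclideanSpace ℝ (Fin n) := t⁻¹ • (z - x) with hv
  refine ⟨fun s => x + s • v, fun _ => v, intervalIntegrable_const, ?_, ?_, ?_, ?_, rfl⟩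
  · have hc : Continuous (fun s : ℝ => L (x + s • v) v) := by
      have : Continuous (fun s : ℝ => ((x + s • v, v) : EuclideanSpace ℝ (Fin n) × EuclideanSpace ℝ (Fin n))) :=
        (continuous_const.add (continuous_id.smul continuous_const)).prodMk continuous_const
      exact hL.comp this
    exact hc.intervalIntegrable 0 t
  · intro s _
    rw [intervalIntegral.integral_const, sub_zero]
  · simp
  · show x + t • t⁻¹ • (z - x) = z
    rw [smul_smul, mul_inv_cancel₀ ht.ne', one_smul]
    abel

/-- Lower bound on every action value, from a pointwise lower bound `C + ‖v‖ ≤ L x v`. -/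
lemma action_lb {n : ℕ} (L : EuclideanSpace ℝ (Fin n) → EuclideanSpace ℝ (Fin n) → ℝ)
    {C : ℝ} (hpt : ∀ p v, C + ‖v‖ ≤ L p v) {t : ℝ} (ht : 0 ≤ t)
    (x z : EuclideanSpace ℝ (Fin n)) :
    ∀ a ∈ actionSet L t x z, C * t + ‖z - x‖ ≤ a := by
  rintro a ⟨ξ, ξ', hint, hintL, hrep, h0, hT, rfl⟩
  have hξt : (∫ τ in (0:ℝ)..t, ξ' τ) = z - x := by
    have := hrep t ⟨ht, le_refl t⟩
    rw [hT] at this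
    rw [this]; abel
  have h1 : (∫ s in (0:ℝ)..t, (C + ‖ξ' s‖)) ≤ ∫ s in (0:ℝ)..t, L (ξ s) (ξ' s) := by
    apply intervalIntegral.integral_mono_on ht
      (intervalIntegrable_const.add hint.norm) hintL
    intro s _
    exact hpt (ξ s) (ξ' s)
  have h2 : ‖z - x‖ ≤ ∫ s in (0:ℝ)..t, ‖ξ' s‖ := by
    rw [← hξt]
    exact intervalIntegral.norm_integral_le_integral_norm ht
  rw [intervalIntegral.integral_add intervalIntegrable_const hint.norm,
    intervalIntegral.integral_const, smul_eq_mul, sub_zero, mul_comm] at h1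
  linarith

/-- Simple lower bound from a constant pointwise lower bound. -/
lemma action_lb_const {n : ℕ} (L : EuclideanSpace ℝ (Fin n) → EuclideanSpace ℝ (Fin n) → ℝ)
    {C : ℝ} (hpt : ∀ p v, C ≤ L p v) {t : ℝ} (ht : 0 ≤ t)
    (x z : EuclideanSpace ℝ (Fin n)) :
    ∀ a ∈ actionSet L t x z, C * t ≤ a := by
  rintro a ⟨ξ, ξ', hint, hintL, hrep, h0, hT, rfl⟩
  have h1 : (∫ _ in (0:ℝ)..t, C) ≤ ∫ s in (0:ℝ)..t, L (ξ s) (ξ' s) :=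
    intervalIntegral.integral_mono_on ht intervalIntegrable_const hintL
      (fun s _ => hpt (ξ s) (ξ' s))
  rwa [intervalIntegral.integral_const, smul_eq_mul, sub_zero, mul_comm] at h1

/-- For a `ℤⁿ`-periodic Lagrangian `L` with superlinear lower bound `θ(|v|) − c₀` and upper
bound `κ₁(|v|)`, there is `t₀ > 0` such that for all `0 < t ≤ t₀` and `x, y, y'` with
`|y − x| < t` and `y − y' ∈ ℤⁿ \ {0}` (so that `|y − y'| ≥ √n`), one has
`A_t(x,y) ≤ A_t(x,y')`; hence the infimum defining the fundamental solution on the torus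
is attained at representatives at distance `< t`. -/
theorem stmt_17 (n : ℕ) (hn : 0 < n)
    (L : EuclideanSpace ℝ (Fin n) → EuclideanSpace ℝ (Fin n) → ℝ)
    (hL : Continuous (Function.uncurry L))
    (hper : ∀ (x v : EuclideanSpace ℝ (Fin n)) (m : Fin n → ℤ),
      L (x + (WithLp.equiv 2 (Fin n → ℝ)).symm (fun i => (m i : ℝ))) v = L x v)
    (θ κ₁ : ℝ → ℝ) (c₀ : ℝ) (hc₀ : 0 < c₀)
    (hθ0 : ∀ r, 0 ≤ r → 0 ≤ θ r)
    (hθsl : Tendsto (fun r => θ r / r) atTop atTop)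
    (hlow : ∀ x v, θ ‖v‖ - c₀ ≤ L x v)
    (hκmono : Monotone κ₁)
    (hup : ∀ x v, L x v ≤ κ₁ ‖v‖) :
    ∃ t₀ > (0 : ℝ), ∀ t, 0 < t → t ≤ t₀ →
      ∀ x y y' : EuclideanSpace ℝ (Fin n), ∀ m : Fin n → ℤ, m ≠ 0 →
        y - y' = (WithLp.equiv 2 (Fin n → ℝ)).symm (fun i => (m i : ℝ)) →
        ‖y - x‖ < t → Real.sqrt n ≤ ‖y - y'‖ →
        sInf (actionSet L t x y) ≤ sInf (actionSet L t x y') := by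
  -- linear lower bound on θ
  obtain ⟨R₀, hR₀⟩ := Filter.eventually_atTop.mp (hθsl.eventually (eventually_ge_atTop 1))
  set R : ℝ := max R₀ 1 with hRdef
  have hR1 : (1:ℝ) ≤ R := le_max_right _ _
  have hθlin : ∀ r : ℝ, 0 ≤ r → r - R ≤ θ r := by
    intro r hr
    rcases le_or_gt r R with h | h
    · linarith [hθ0 r hr]
    · have hrpos : 0 < r := by linarith
      have h1 := hR₀ r (le_trans (le_max_left _ _) h.le)
      rw [le_div_iff₀ hrpos, one_mul] at h1
      linarith
  set M : ℝ := max (κ₁ 1) 0 with hMdef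
  have hM0 : 0 ≤ M := le_max_right _ _
  have hMκ : κ₁ 1 ≤ M := le_max_left _ _
  have hDpos : 0 < M + 1 + R + c₀ := by linarith
  refine ⟨(M + 1 + R + c₀)⁻¹, inv_pos.mpr hDpos, ?_⟩
  intro t ht ht₀ x y y' m hm hyy' hyx hsqrt
  have hsq1 : (1:ℝ) ≤ Real.sqrt n := by
    rw [show (1:ℝ) = Real.sqrt 1 by simp]
    exact Real.sqrt_le_sqrt (by exact_mod_cast hn)
  have htbound : t * (M + 1 + R + c₀) ≤ 1 :=
    calc t * (M + 1 + R + c₀) ≤ (M + 1 + R + c₀)⁻¹ * (M + 1 + R + c₀) :=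
          mul_le_mul_of_nonneg_right ht₀ hDpos.le
      _ = 1 := inv_mul_cancel₀ hDpos.ne'
  -- upper bound: straight line from x to y
  have hub : sInf (actionSet L t x y) ≤ t * κ₁ 1 := by
    have hbdd : BddBelow (actionSet L t x y) := by
      refine ⟨(-c₀) * t, fun a ha => ?_⟩
      exact action_lb_const L (fun p v => by linarith [hlow p v, hθ0 ‖v‖ (norm_nonneg v)])
        ht.le x y a ha
    refine le_trans (csInf_le hbdd (straight_mem L hL ht x y)) ?_
    have hv1 : ‖t⁻¹ • (y - x)‖ ≤ 1 := by
      rw [norm_smul, norm_inv, Real.norm_eq_abs, abs_of_pos ht]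
      rw [inv_mul_le_iff₀ ht]
      linarith
    calc (∫ s in (0:ℝ)..t, L (x + s • (t⁻¹ • (y - x))) (t⁻¹ • (y - x)))
        ≤ ∫ _ in (0:ℝ)..t, κ₁ 1 := by
          apply intervalIntegral.integral_mono_on ht.le ?_ intervalIntegrable_const
          · intro s _
            exact le_trans (hup _ _) (hκmono hv1)
          · have hc : Continuous (fun s : ℝ => L (x + s • (t⁻¹ • (y - x))) (t⁻¹ • (y - x))) := by
              have : Continuous (fun s : ℝ => ((x + s • (t⁻¹ • (y - x)), t⁻¹ • (y - x)) :
                  EuclideanSpace ℝ (Fin n) × EuclideanSpace ℝ (Fin n))) :=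
                (continuous_const.add (continuous_id.smul continuous_const)).prodMk continuous_const
              exact hL.comp this
            exact hc.intervalIntegrable 0 t
      _ = t * κ₁ 1 := by rw [intervalIntegral.integral_const, smul_eq_mul, sub_zero]
  -- lower bound: any arc from x to y'
  have hlb : Real.sqrt n - t - (R + c₀) * t ≤ sInf (actionSet L t x y') := by
    have hne : (actionSet L t x y').Nonempty := ⟨_, straight_mem L hL ht x y'⟩
    refine le_csInf hne (fun a ha => ?_)
    have hpt : ∀ p v, (-(R + c₀)) + ‖v‖ ≤ L p v := by
      intro p v
      have := hθlin ‖v‖ (norm_nonneg v)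
      linarith [hlow p v]
    have h1 := action_lb L hpt ht.le x y' a ha
    have h2 : Real.sqrt n - t ≤ ‖y' - x‖ := by
      have : ‖y - y'‖ ≤ ‖y - x‖ + ‖y' - x‖ := by
        have := norm_sub_le_norm_sub_add_norm_sub y x y'
        calc ‖y - y'‖ ≤ ‖y - x‖ + ‖x - y'‖ := norm_sub_le_norm_sub_add_norm_sub y x y'
          _ = ‖y - x‖ + ‖y' - x‖ := by rw [norm_sub_rev x y']
      linarith
    linarith
  -- combine
  have hmid : t * κ₁ 1 ≤ Real.sqrt n - t - (R + c₀) * t := by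
    have h1 : t * κ₁ 1 ≤ t * M := mul_le_mul_of_nonneg_left hMκ ht.le
    nlinarith
  linarith
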